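/- With the context's notation (in particular {f₁,…,f_s} is a basis of R), the kernel of the substitution homomorphism ψ : K⟦X₁,…,X_s⟧ → K⟦x⟧, Xᵢ ↦ fᵢ, is the ideal of K⟦X₁,…,X_s⟧ generated by G₁,…,G_r, where Gᵢ = Fᵢ − Pᵢ. -/

import Mathlib

set_option synthInstance.maxHeartbeats 1000000
set_option maxHeartbeats 1000000

open PowerSeries

/-- The order of a formal power series: the least `i` such that the coefficient of `x^i`
is nonzero (junk value `0` for the zero series). -/
noncomputable def ord (K : Type*) [Field K] (f : PowerSeries K) : ℕ :=
  sInf {i | coeff i f ≠ 0}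

/-- The set of orders of nonzero elements of a subalgebra `R ⊆ K⟦x⟧`. -/
def oSet (K : Type*) [Field K] (R : Subalgebra K (PowerSeries K)) : Set ℕ :=
  {n | ∃ f ∈ R, f ≠ 0 ∧ ord K f = n}

/-- The quotient `K⟦x⟧/R` has finite length as an `R`-module. -/
def FiniteLengthQuot (K : Type*) [Field K] (R : Subalgebra K (PowerSeries K)) : Prop :=
  IsFiniteLength R (PowerSeries K ⧸ LinearMap.range (Algebra.linearMap R (PowerSeries K)))

/-- The closure of a subalgebra of `K⟦x⟧` in the `x`-adic topology:
`f` belongs to the closure of `S` iff for every `n` there is an element of `S`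
agreeing with `f` on all coefficients up to `n`. -/
def adicClosure {K : Type*} [Field K] (S : Subalgebra K (PowerSeries K)) :
    Subalgebra K (PowerSeries K) where
  carrier := {f | ∀ n : ℕ, ∃ p ∈ S, ∀ i ≤ n, coeff i f = coeff i p}
  add_mem' := by
    intro f g hf hg n
    obtain ⟨p, hpS, hp⟩ := hf n
    obtain ⟨q, hqS, hq⟩ := hg n
    exact ⟨p + q, S.add_mem hpS hqS, fun i hi => by
      simp [map_add, hp i hi, hq i hi]⟩
  mul_mem' := by
    intro f g hf hg n
    obtain ⟨p, hpS, hp⟩ := hf n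
    obtain ⟨q, hqS, hq⟩ := hg n
    refine ⟨p * q, S.mul_mem hpS hqS, fun i hi => ?_⟩
    rw [coeff_mul, coeff_mul]
    refine Finset.sum_congr rfl fun ab hab => ?_
    have h : ab.1 + ab.2 = i := by simpa using hab
    rw [hp ab.1 (by omega), hq ab.2 (by omega)]
  algebraMap_mem' := fun r => fun n => ⟨algebraMap K _ r, S.algebraMap_mem r, fun i _ => rfl⟩

/-- `K⟦f₁,…,f_s⟧`, the subalgebra of `K⟦x⟧` consisting of all power series of the form
`P(f₁,…,f_s)` with `P ∈ K⟦X₁,…,X_s⟧` (for `fᵢ` of positive order), realized as the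
`x`-adic closure of the subalgebra generated by `f₁, …, f_s`; this closure coincides with
the image of the substitution homomorphism `K⟦X₁,…,X_s⟧ → K⟦x⟧`, `Xᵢ ↦ fᵢ`. -/
noncomputable def seriesAlgebra {K : Type*} [Field K] {s : ℕ} (f : Fin s → PowerSeries K) :
    Subalgebra K (PowerSeries K) :=
  adicClosure (Algebra.adjoin K (Set.range f))

/-- The coefficient of `xⁿ` in the substitution `P(f₁,…,f_s)`: when every `fᵢ` has
positive order, only exponents `θ` with all entries `≤ n` contribute, so the defining sum
is finite. -/
noncomputable def substCoeff {K : Type*} [Field K] {s : ℕ} (f : Fin s → PowerSeries K)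
    (P : MvPowerSeries (Fin s) K) (n : ℕ) : K :=
  ∑ θ ∈ Finset.Iic (Finsupp.equivFunOnFinite.symm fun _ : Fin s => n),
    MvPowerSeries.coeff θ P * coeff n (∏ i, f i ^ θ i)

/-- The substitution homomorphism `ψ : K⟦X₁,…,X_s⟧ → K⟦x⟧`, `Xᵢ ↦ fᵢ` (for `fᵢ` of
positive order), `P ↦ P(f₁,…,f_s)`, given coefficientwise. -/
noncomputable def substSeries {K : Type*} [Field K] {s : ℕ} (f : Fin s → PowerSeries K)
    (P : MvPowerSeries (Fin s) K) : PowerSeries K :=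
  PowerSeries.mk (substCoeff f P)

namespace StmtAux

variable {K : Type*} [Field K] {s : ℕ}

/-- weight of an exponent -/
def wtF (d : Fin s → ℕ) (θ : Fin s →₀ ℕ) : ℕ := ∑ j, θ j * d j

lemma wtF_add (d : Fin s → ℕ) (μ ν : Fin s →₀ ℕ) :
    wtF d (μ + ν) = wtF d μ + wtF d ν := by
  simp [wtF, add_mul, Finset.sum_add_distrib]

lemma le_wtF {d : Fin s → ℕ} (hd : ∀ j, 1 ≤ d j) (θ : Fin s →₀ ℕ) (j : Fin s) :
    θ j ≤ wtF d θ :=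
  calc θ j = θ j * 1 := (mul_one _).symm
  _ ≤ θ j * d j := Nat.mul_le_mul_left _ (hd j)
  _ ≤ wtF d θ :=
    Finset.single_le_sum (f := fun j => θ j * d j) (fun _ _ => Nat.zero_le _) (Finset.mem_univ j)

lemma wtF_mono (d : Fin s → ℕ) {μ ν : Fin s →₀ ℕ} (h : μ ≤ ν) : wtF d μ ≤ wtF d ν :=
  Finset.sum_le_sum fun j _ => Nat.mul_le_mul_right _ (Finsupp.le_def.mp h j)

/-- monic of order `a` -/
def Mon (a : ℕ) (A : PowerSeries K) : Prop :=
  (∀ k, k < a → coeff k A = 0) ∧ coeff a A = 1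

lemma Mon.one : Mon 0 (1 : PowerSeries K) :=
  ⟨fun k hk => absurd hk (Nat.not_lt_zero _), by simp⟩

lemma Mon.mul {a b : ℕ} {A B : PowerSeries K} (hA : Mon a A) (hB : Mon b B) :
    Mon (a + b) (A * B) := by
  constructor
  · intro k hk
    rw [coeff_mul]
    refine Finset.sum_eq_zero fun p hp => ?_
    have hp' := Finset.HasAntidiagonal.mem_antidiagonal.mp hp
    rcases lt_or_ge p.1 a with h | h
    · rw [hA.1 _ h, zero_mul]
    · rw [hB.1 p.2 (by omega), mul_zero]
  · rw [coeff_mul]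
    rw [Finset.sum_eq_single_of_mem (a, b) (Finset.HasAntidiagonal.mem_antidiagonal.mpr rfl)]
    · rw [hA.2, hB.2, one_mul]
    · intro p hp hne
      have hp' := Finset.HasAntidiagonal.mem_antidiagonal.mp hp
      rcases lt_or_ge p.1 a with h | h
      · rw [hA.1 _ h, zero_mul]
      · have : p.2 < b := by
          rcases Nat.lt_or_ge p.2 b with h2 | h2
          · exact h2
          · exfalso; apply hne
            have h1 : p.1 = a := by omega
            have h2' : p.2 = b := by omega
            exact Prod.ext h1 h2'
        rw [hB.1 _ this, mul_zero]

lemma Mon.pow {a : ℕ} {A : PowerSeries K} (hA : Mon a A) (m : ℕ) :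
    Mon (m * a) (A ^ m) := by
  induction m with
  | zero => simpa using Mon.one
  | succ m ih =>
    have := ih.mul hA
    rw [pow_succ]
    simpa [Nat.succ_mul] using this

lemma Mon.prod {ι : Type*} (t : Finset ι) (g : ι → PowerSeries K) (a : ι → ℕ)
    (h : ∀ i ∈ t, Mon (a i) (g i)) :
    Mon (∑ i ∈ t, a i) (∏ i ∈ t, g i) := by
  classical
  induction t using Finset.induction_on with
  | empty => simpa using Mon.one
  | @insert i t' hni ih =>
    rw [Finset.sum_insert hni, Finset.prod_insert hni]
    exact (h i (Finset.mem_insert_self i t')).mul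
      (ih fun j hj => h j (Finset.mem_insert_of_mem hj))

variable (f : Fin s → PowerSeries K)

lemma mon_f (hmonic : ∀ i, coeff (ord K (f i)) (f i) = 1) (i : Fin s) :
    Mon (ord K (f i)) (f i) := by
  refine ⟨fun k hk => ?_, hmonic i⟩
  by_contra hc
  have : ord K (f i) ≤ k := Nat.sInf_le (show k ∈ {m | coeff m (f i) ≠ 0} from hc)
  omega

lemma mon_pi (hmonic : ∀ i, coeff (ord K (f i)) (f i) = 1)
    (θ : Fin s →₀ ℕ) :
    Mon (wtF (fun j => ord K (f j)) θ) (∏ j, f j ^ θ j) := by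
  exact Mon.prod Finset.univ _ _ fun j _ => (mon_f f hmonic j).pow (θ j)


/-- the constant finsupp with all entries `n` -/
noncomputable def nbar (s n : ℕ) : Fin s →₀ ℕ := Finsupp.equivFunOnFinite.symm fun _ : Fin s => n

lemma mem_Iic_nbar {n : ℕ} {θ : Fin s →₀ ℕ} : θ ∈ Finset.Iic (nbar s n) ↔ ∀ j, θ j ≤ n := by
  simp [nbar, Finset.mem_Iic, Finsupp.le_def]


lemma coeff_substSeries (P : MvPowerSeries (Fin s) K) (n : ℕ) :
    coeff n (substSeries f P)
      = ∑ θ ∈ Finset.Iic (nbar s n), MvPowerSeries.coeff θ P * coeff n (∏ i, f i ^ θ i) := by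
  rw [substSeries, coeff_mk]; rfl

variable (hmonic : ∀ i, coeff (ord K (f i)) (f i) = 1)
  (hford : ∀ i, 0 < ord K (f i))

include hmonic in
lemma coeff_pi_zero_of_lt {n : ℕ} {θ : Fin s →₀ ℕ} (h : n < wtF (fun j => ord K (f j)) θ) :
    coeff n (∏ i, f i ^ θ i) = 0 :=
  (mon_pi f hmonic θ).1 n h

include hmonic in
lemma coeff_pi_wt (θ : Fin s →₀ ℕ) :
    coeff (wtF (fun j => ord K (f j)) θ) (∏ i, f i ^ θ i) = 1 :=
  (mon_pi f hmonic θ).2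

include hmonic hford in
lemma coeff_pi_zero_of_not_le {n : ℕ} {θ : Fin s →₀ ℕ} (h : θ ∉ Finset.Iic (nbar s n)) :
    coeff n (∏ i, f i ^ θ i) = 0 := by
  apply coeff_pi_zero_of_lt f hmonic
  rw [mem_Iic_nbar] at h
  push_neg at h
  obtain ⟨j, hj⟩ := h
  exact lt_of_lt_of_le hj (le_wtF hford θ j)

lemma substSeries_sub (A B : MvPowerSeries (Fin s) K) :
    substSeries f (A - B) = substSeries f A - substSeries f B := by
  ext n
  simp only [coeff_substSeries, map_sub, sub_mul, Finset.sum_sub_distrib]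

lemma substSeries_zero : substSeries f (0 : MvPowerSeries (Fin s) K) = 0 := by
  ext n; simp [coeff_substSeries]

lemma substSeries_sum {ι : Type*} (t : Finset ι) (g : ι → MvPowerSeries (Fin s) K) :
    substSeries f (∑ i ∈ t, g i) = ∑ i ∈ t, substSeries f (g i) := by
  ext n
  simp only [coeff_substSeries, map_sum, Finset.sum_mul]
  rw [Finset.sum_comm]

lemma nbar_apply (k : ℕ) (j : Fin s) : (nbar s k) j = k := rfl

lemma nbar_mono {k n : ℕ} (h : k ≤ n) : nbar s k ≤ nbar s n :=
  Finsupp.le_def.mpr fun _ => h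

include hmonic hford in
lemma substSeries_monomial (θ0 : Fin s →₀ ℕ) :
    substSeries f (MvPowerSeries.monomial θ0 (1 : K)) = ∏ i, f i ^ θ0 i := by
  ext n
  rw [coeff_substSeries]
  classical
  rw [Finset.sum_congr rfl fun θ _ => by
    rw [MvPowerSeries.coeff_monomial, ite_mul, one_mul, zero_mul]]
  rw [Finset.sum_ite_eq' (Finset.Iic (nbar s n)) θ0 (fun θ => coeff n (∏ i, f i ^ θ i))]
  split_ifs with hmem
  · simp
  · rw [coeff_pi_zero_of_not_le f hmonic hford hmem]

include hmonic hford in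
lemma substSeries_mul (A B : MvPowerSeries (Fin s) K) :
    substSeries f (A * B) = substSeries f A * substSeries f B := by
  classical
  ext n
  set nb := nbar s n with hnb
  have hpi : ∀ μ ν : Fin s →₀ ℕ,
      (∏ i, f i ^ (μ + ν) i) = (∏ i, f i ^ μ i) * (∏ i, f i ^ ν i) := by
    intro μ ν
    rw [← Finset.prod_mul_distrib]
    exact Finset.prod_congr rfl fun j _ => by rw [Finsupp.add_apply, pow_add]
  set c : ℕ → (Fin s →₀ ℕ) → K := fun k θ => coeff k (∏ i, f i ^ θ i) with hc
  -- RHS computation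
  have hR : coeff n (substSeries f A * substSeries f B)
      = ∑ μ ∈ Finset.Iic nb, ∑ ν ∈ Finset.Iic nb,
          MvPowerSeries.coeff μ A * MvPowerSeries.coeff ν B * c n (μ + ν) := by
    rw [PowerSeries.coeff_mul]
    have step1 : ∀ p ∈ Finset.HasAntidiagonal.antidiagonal n,
        coeff p.1 (substSeries f A) * coeff p.2 (substSeries f B)
          = (∑ μ ∈ Finset.Iic nb, MvPowerSeries.coeff μ A * c p.1 μ)
            * (∑ ν ∈ Finset.Iic nb, MvPowerSeries.coeff ν B * c p.2 ν) := by
      intro p hp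
      have hpn := Finset.HasAntidiagonal.mem_antidiagonal.mp hp
      rw [coeff_substSeries, coeff_substSeries]
      congr 1
      · refine Finset.sum_subset (Finset.Iic_subset_Iic.mpr (nbar_mono (by omega))) ?_
        intro θ _ hθ
        rw [show MvPowerSeries.coeff θ A * coeff p.1 (∏ i, f i ^ θ i)
            = MvPowerSeries.coeff θ A * 0 from by
          rw [coeff_pi_zero_of_not_le f hmonic hford hθ], mul_zero]
      · refine Finset.sum_subset (Finset.Iic_subset_Iic.mpr (nbar_mono (by omega))) ?_
        intro θ _ hθ
        rw [show MvPowerSeries.coeff θ B * coeff p.2 (∏ i, f i ^ θ i)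
            = MvPowerSeries.coeff θ B * 0 from by
          rw [coeff_pi_zero_of_not_le f hmonic hford hθ], mul_zero]
    rw [Finset.sum_congr rfl step1]
    rw [Finset.sum_congr rfl fun p _ => Finset.sum_mul_sum _ _ _ _]
    rw [Finset.sum_comm]
    refine Finset.sum_congr rfl fun μ _ => ?_
    rw [Finset.sum_comm]
    refine Finset.sum_congr rfl fun ν _ => ?_
    rw [Finset.sum_congr rfl fun p _ => mul_mul_mul_comm
      (MvPowerSeries.coeff μ A) (c p.1 μ) (MvPowerSeries.coeff ν B) (c p.2 ν)]
    rw [← Finset.mul_sum]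
    congr 1
    rw [hc]
    simp only []
    rw [hpi μ ν, PowerSeries.coeff_mul]
  -- LHS computation
  have hL : coeff n (substSeries f (A * B))
      = ∑ μ ∈ Finset.Iic nb, ∑ ν ∈ Finset.Iic nb,
          MvPowerSeries.coeff μ A * MvPowerSeries.coeff ν B * c n (μ + ν) := by
    rw [coeff_substSeries]
    -- rewrite each term via MvPowerSeries.coeff_mul
    have e1 : ∀ θ ∈ Finset.Iic nb,
        MvPowerSeries.coeff θ (A * B) * c n θ
          = ∑ q ∈ Finset.HasAntidiagonal.antidiagonal θ,
              MvPowerSeries.coeff q.1 A * MvPowerSeries.coeff q.2 B * c n (q.1 + q.2) := by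
      intro θ _
      rw [MvPowerSeries.coeff_mul, Finset.sum_mul]
      exact Finset.sum_congr rfl fun q hq => by
        rw [Finset.HasAntidiagonal.mem_antidiagonal.mp hq]
    rw [Finset.sum_congr rfl e1]
    -- now reindex
    set T' : Finset ((Fin s →₀ ℕ) × (Fin s →₀ ℕ)) :=
      (Finset.Iic nb ×ˢ Finset.Iic nb).filter (fun q => q.1 + q.2 ∈ Finset.Iic nb) with hT'
    have hfib := Finset.sum_fiberwise_of_maps_to (s := T') (t := Finset.Iic nb)
      (g := fun q => q.1 + q.2)
      (fun q hq => (Finset.mem_filter.mp hq).2)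
      (fun q => MvPowerSeries.coeff q.1 A * MvPowerSeries.coeff q.2 B * c n (q.1 + q.2))
    have hfiber_eq : ∀ θ ∈ Finset.Iic nb,
        T'.filter (fun q => q.1 + q.2 = θ) = Finset.HasAntidiagonal.antidiagonal θ := by
      intro θ hθ
      ext q
      simp only [hT', Finset.mem_filter, Finset.mem_product, Finset.HasAntidiagonal.mem_antidiagonal]
      constructor
      · rintro ⟨⟨-, -⟩, h⟩; exact h
      · intro h
        refine ⟨⟨⟨?_, ?_⟩, ?_⟩, h⟩
        · exact Finset.mem_Iic.mpr (le_trans (h ▸ (le_self_add : q.1 ≤ q.1 + q.2))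
            (Finset.mem_Iic.mp hθ))
        · exact Finset.mem_Iic.mpr (le_trans (h ▸ (le_add_self : q.2 ≤ q.1 + q.2))
            (Finset.mem_Iic.mp hθ))
        · rw [h]; exact hθ
    rw [Finset.sum_congr rfl fun θ hθ => by rw [← hfiber_eq θ hθ]]
    rw [hfib]
    -- extend T' to the full product
    rw [show (∑ q ∈ T', MvPowerSeries.coeff q.1 A * MvPowerSeries.coeff q.2 B * c n (q.1 + q.2))
        = ∑ q ∈ Finset.Iic nb ×ˢ Finset.Iic nb,
            MvPowerSeries.coeff q.1 A * MvPowerSeries.coeff q.2 B * c n (q.1 + q.2) from ?_]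
    · rw [Finset.sum_product]
    · refine Finset.sum_subset (Finset.filter_subset _ _) ?_
      intro q hq hq'
      have : q.1 + q.2 ∉ Finset.Iic nb := by
        intro hmem
        exact hq' (Finset.mem_filter.mpr ⟨hq, hmem⟩)
      rw [show c n (q.1 + q.2) = 0 from coeff_pi_zero_of_not_le f hmonic hford this, mul_zero]
  rw [hL, hR]


lemma coeff_mul_monomial_one (A : MvPowerSeries (Fin s) K) (γ θ : Fin s →₀ ℕ) :
    MvPowerSeries.coeff θ (A * MvPowerSeries.monomial γ 1)
      = if γ ≤ θ then MvPowerSeries.coeff (θ - γ) A else 0 := by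
  classical
  rw [MvPowerSeries.coeff_mul]
  split_ifs with hle
  · rw [Finset.sum_eq_single_of_mem (θ - γ, γ)
      (Finset.HasAntidiagonal.mem_antidiagonal.mpr (tsub_add_cancel_of_le hle))]
    · rw [MvPowerSeries.coeff_monomial, if_pos rfl, mul_one]
    · intro p hp hne
      rw [MvPowerSeries.coeff_monomial]
      rw [if_neg, mul_zero]
      intro h2
      apply hne
      have hp' := Finset.HasAntidiagonal.mem_antidiagonal.mp hp
      have h3 : p.1 + γ = (θ - γ) + γ := by
        rw [tsub_add_cancel_of_le hle, ← hp', h2]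
      exact Prod.ext (add_right_cancel h3) h2
  · refine Finset.sum_eq_zero fun p hp => ?_
    rw [MvPowerSeries.coeff_monomial, if_neg, mul_zero]
    intro h2
    apply hle
    have hp' := Finset.HasAntidiagonal.mem_antidiagonal.mp hp
    rw [← hp', h2]
    exact le_add_self

lemma aeval_monomial_wt (γ : Fin s →₀ ℕ) (a : K) :
    (MvPolynomial.aeval fun i => (Polynomial.X : Polynomial K) ^ ord K (f i))
        (MvPolynomial.monomial γ a)
      = Polynomial.C a * Polynomial.X ^ wtF (fun j => ord K (f j)) γ := by
  rw [MvPolynomial.aeval_monomial, Finsupp.prod_fintype _ _ (fun i => pow_zero _)]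
  congr 1
  rw [Finset.prod_congr rfl fun j _ => (pow_mul Polynomial.X (ord K (f j)) (γ j)).symm]
  rw [Finset.prod_pow_eq_pow_sum]
  congr 1
  exact Finset.sum_congr rfl fun j _ => Nat.mul_comm _ _

lemma wt_beta {r : ℕ} {α β : Fin r → (Fin s →₀ ℕ)}
    (hker : RingHom.ker (MvPolynomial.aeval fun i => (Polynomial.X : Polynomial K) ^ ord K (f i))
      = Ideal.span (Set.range fun i =>
          (MvPolynomial.monomial (α i) (1 : K) - MvPolynomial.monomial (β i) (1 : K))))
    (i : Fin r) :
    wtF (fun j => ord K (f j)) (β i) = wtF (fun j => ord K (f j)) (α i) := by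
  have hmem : (MvPolynomial.monomial (α i) (1:K) - MvPolynomial.monomial (β i) 1)
      ∈ RingHom.ker (MvPolynomial.aeval fun i => (Polynomial.X : Polynomial K) ^ ord K (f i)) := by
    rw [hker]; exact Ideal.subset_span ⟨i, rfl⟩
  rw [RingHom.mem_ker, map_sub, aeval_monomial_wt f, aeval_monomial_wt f, map_one, one_mul,
    one_mul, sub_eq_zero] at hmem
  have := congrArg Polynomial.natDegree hmem
  simpa [Polynomial.natDegree_X_pow] using this.symm

include hmonic hford in
lemma substSeries_G_zero {r : ℕ} (α β : Fin r → (Fin s →₀ ℕ)) (P : Fin r → MvPowerSeries (Fin s) K)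
    (hP : ∀ i, substSeries f (P i) = (∏ j, f j ^ (α i) j) - (∏ j, f j ^ (β i) j)) (i : Fin r) :
    substSeries f (MvPowerSeries.monomial (α i) (1:K)
      - MvPowerSeries.monomial (β i) 1 - P i) = 0 := by
  rw [substSeries_sub, substSeries_sub, substSeries_monomial f hmonic hford,
    substSeries_monomial f hmonic hford, hP i]
  exact sub_self _

include hmonic hford in
lemma step {r : ℕ} (α β : Fin r → (Fin s →₀ ℕ)) (P : Fin r → MvPowerSeries (Fin s) K)
    (hker : RingHom.ker (MvPolynomial.aeval fun i => (Polynomial.X : Polynomial K) ^ ord K (f i))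
      = Ideal.span (Set.range fun i =>
          (MvPolynomial.monomial (α i) (1 : K) - MvPolynomial.monomial (β i) (1 : K))))
    (hP : ∀ i, substSeries f (P i) = (∏ j, f j ^ (α i) j) - (∏ j, f j ^ (β i) j))
    (hPweight : ∀ i, ∀ θ : Fin s →₀ ℕ, MvPowerSeries.coeff θ (P i) ≠ 0 →
      wtF (fun j => ord K (f j)) (α i) < wtF (fun j => ord K (f j)) θ)
    (n : ℕ) (Q : MvPowerSeries (Fin s) K) (hQ : substSeries f Q = 0)
    (hlow : ∀ θ, wtF (fun j => ord K (f j)) θ < n → MvPowerSeries.coeff θ Q = 0) :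
    ∃ h : Fin r → MvPowerSeries (Fin s) K,
      (∀ i θ, MvPowerSeries.coeff θ (h i) ≠ 0
          → wtF (fun j => ord K (f j)) θ + wtF (fun j => ord K (f j)) (α i) = n)
      ∧ substSeries f (Q - ∑ i, h i *
          (MvPowerSeries.monomial (α i) 1 - MvPowerSeries.monomial (β i) 1 - P i)) = 0
      ∧ ∀ θ, wtF (fun j => ord K (f j)) θ < n + 1
          → MvPowerSeries.coeff θ (Q - ∑ i, h i *
              (MvPowerSeries.monomial (α i) 1 - MvPowerSeries.monomial (β i) 1 - P i)) = 0 := by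
  classical
  have hmemWn : ∀ θ : Fin s →₀ ℕ, wtF (fun j => ord K (f j)) θ = n
      → θ ∈ (Finset.Iic (nbar s n)).filter (fun θ => wtF (fun j => ord K (f j)) θ = n) := by
    intro θ hθ
    refine Finset.mem_filter.mpr ⟨Finset.mem_Iic.mpr (Finsupp.le_def.mpr fun j => ?_), hθ⟩
    have h1 := le_wtF (d := fun j => ord K (f j)) (fun j => hford j) θ j
    show θ j ≤ n
    omega
  -- the weight-n part of Q is killed by φ
  have hsum : ∑ θ ∈ (Finset.Iic (nbar s n)).filter (fun θ => wtF (fun j => ord K (f j)) θ = n),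
      MvPowerSeries.coeff θ Q = 0 := by
    have h0 : coeff n (substSeries f Q) = 0 := by rw [hQ]; simp
    rw [coeff_substSeries] at h0
    rw [← Finset.sum_filter_add_sum_filter_not (Finset.Iic (nbar s n))
      (fun θ => wtF (fun j => ord K (f j)) θ = n)] at h0
    have h2 : ∑ θ ∈ (Finset.Iic (nbar s n)).filter
        (fun θ => ¬ wtF (fun j => ord K (f j)) θ = n),
        MvPowerSeries.coeff θ Q * coeff n (∏ i, f i ^ θ i) = 0 := by
      refine Finset.sum_eq_zero fun θ hθ => ?_
      have hne := (Finset.mem_filter.mp hθ).2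
      rcases Nat.lt_or_ge (wtF (fun j => ord K (f j)) θ) n with hlt | hge
      · rw [hlow θ hlt, zero_mul]
      · have hgt : n < wtF (fun j => ord K (f j)) θ :=
          lt_of_le_of_ne hge (fun e => hne e.symm)
        rw [coeff_pi_zero_of_lt f hmonic hgt, mul_zero]
    rw [h2, add_zero] at h0
    rw [← h0]
    refine Finset.sum_congr rfl fun θ hθ => ?_
    have hwn := (Finset.mem_filter.mp hθ).2
    conv_rhs => rw [← hwn, coeff_pi_wt f hmonic θ, mul_one]
  -- the weight-n polynomial part of Q
  have hQnker : (∑ θ ∈ (Finset.Iic (nbar s n)).filter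
        (fun θ => wtF (fun j => ord K (f j)) θ = n),
        MvPolynomial.monomial θ (MvPowerSeries.coeff θ Q))
      ∈ RingHom.ker (MvPolynomial.aeval fun i => (Polynomial.X : Polynomial K) ^ ord K (f i)) := by
    rw [RingHom.mem_ker, map_sum]
    rw [Finset.sum_congr rfl fun θ hθ => by
      rw [aeval_monomial_wt f, (Finset.mem_filter.mp hθ).2]]
    rw [← Finset.sum_mul, ← map_sum, hsum, map_zero, zero_mul]
  rw [hker, Ideal.mem_span_range_iff_exists_fun] at hQnker
  obtain ⟨q, hq⟩ := hQnker
  -- the homogeneous multipliers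
  set h : Fin r → MvPowerSeries (Fin s) K := fun i =>
    (fun θ' => if wtF (fun j => ord K (f j)) θ' + wtF (fun j => ord K (f j)) (α i) = n
      then MvPolynomial.coeff θ' (q i) else 0) with hh
  have hcoeffh : ∀ (i : Fin r) (θ' : Fin s →₀ ℕ), MvPowerSeries.coeff θ' (h i)
      = if wtF (fun j => ord K (f j)) θ' + wtF (fun j => ord K (f j)) (α i) = n
        then MvPolynomial.coeff θ' (q i) else 0 := fun i θ' => rfl
  refine ⟨h, ?_, ?_, ?_⟩
  · intro i θ hne
    by_contra hcon
    exact hne (by rw [hcoeffh]; exact if_neg hcon)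
  · rw [substSeries_sub, substSeries_sum, hQ]
    rw [Finset.sum_congr rfl fun i _ => by
      rw [substSeries_mul f hmonic hford,
        substSeries_G_zero f hmonic hford α β P hP i, mul_zero]]
    simp
  · intro θ hθ
    have key : ∀ (i : Fin r) (γ : Fin s →₀ ℕ),
        wtF (fun j => ord K (f j)) γ = wtF (fun j => ord K (f j)) (α i) →
        MvPowerSeries.coeff θ (h i * MvPowerSeries.monomial γ 1)
          = if wtF (fun j => ord K (f j)) θ = n ∧ γ ≤ θ
            then MvPolynomial.coeff (θ - γ) (q i) else 0 := by
      intro i γ hγ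
      rw [coeff_mul_monomial_one]
      by_cases hle : γ ≤ θ
      · rw [if_pos hle, hcoeffh]
        have hwt : wtF (fun j => ord K (f j)) (θ - γ) + wtF (fun j => ord K (f j)) γ
            = wtF (fun j => ord K (f j)) θ := by
          rw [← wtF_add, tsub_add_cancel_of_le hle]
        by_cases hn : wtF (fun j => ord K (f j)) θ = n
        · rw [if_pos (by omega), if_pos ⟨hn, hle⟩]
        · rw [if_neg (fun hcon => hn (by omega)), if_neg (fun hcon => hn hcon.1)]
      · rw [if_neg hle, if_neg (fun hcon => hle hcon.2)]
    have hβα := fun i => wt_beta f (α := α) (β := β) hker i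
    -- expand the coefficient of each product
    have hterm : ∀ i : Fin r, MvPowerSeries.coeff θ (h i *
        (MvPowerSeries.monomial (α i) 1 - MvPowerSeries.monomial (β i) 1 - P i))
        = (if wtF (fun j => ord K (f j)) θ = n ∧ α i ≤ θ
            then MvPolynomial.coeff (θ - α i) (q i) else 0)
          - (if wtF (fun j => ord K (f j)) θ = n ∧ β i ≤ θ
            then MvPolynomial.coeff (θ - β i) (q i) else 0) := by
      intro i
      rw [mul_sub, mul_sub, map_sub, map_sub, key i (α i) rfl, key i (β i) (hβα i)]
      have hPz : MvPowerSeries.coeff θ (h i * P i) = 0 := by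
        rw [MvPowerSeries.coeff_mul]
        refine Finset.sum_eq_zero fun p hp => ?_
        by_cases h1 : MvPowerSeries.coeff p.1 (h i) = 0
        · rw [h1, zero_mul]
        by_cases h2 : MvPowerSeries.coeff p.2 (P i) = 0
        · rw [h2, mul_zero]
        exfalso
        have e1 : wtF (fun j => ord K (f j)) p.1 + wtF (fun j => ord K (f j)) (α i) = n := by
          by_contra hcon
          exact h1 (by rw [hcoeffh]; exact if_neg hcon)
        have e2 := hPweight i p.2 h2
        have e3 : wtF (fun j => ord K (f j)) p.1 + wtF (fun j => ord K (f j)) p.2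
            = wtF (fun j => ord K (f j)) θ := by
          rw [← wtF_add, Finset.HasAntidiagonal.mem_antidiagonal.mp hp]
        omega
      rw [hPz, sub_zero]
    rw [map_sub, map_sum, Finset.sum_congr rfl fun i _ => hterm i]
    rcases Nat.lt_or_ge (wtF (fun j => ord K (f j)) θ) n with hlt | hge
    · rw [hlow θ hlt]
      rw [Finset.sum_congr rfl fun i _ => by
        rw [if_neg (fun hcon => absurd hcon.1 (by omega)),
          if_neg (fun hcon => absurd hcon.1 (by omega)), sub_zero]]
      simp
    · have hn : wtF (fun j => ord K (f j)) θ = n := by omega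
      -- identify coeff θ Q with the coefficient of the weight-n polynomial
      have hcQ : MvPowerSeries.coeff θ Q
          = MvPolynomial.coeff θ (∑ θ' ∈ (Finset.Iic (nbar s n)).filter
              (fun θ' => wtF (fun j => ord K (f j)) θ' = n),
              MvPolynomial.monomial θ' (MvPowerSeries.coeff θ' Q)) := by
        rw [MvPolynomial.coeff_sum]
        rw [Finset.sum_congr rfl fun θ' _ => MvPolynomial.coeff_monomial θ θ' _]
        rw [Finset.sum_ite_eq' _ θ (fun θ' => MvPowerSeries.coeff θ' Q)]
        rw [if_pos (hmemWn θ hn)]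
      rw [hcQ, ← hq, MvPolynomial.coeff_sum]
      rw [Finset.sum_congr rfl fun i _ => by
        rw [mul_sub, MvPolynomial.coeff_sub, MvPolynomial.coeff_mul_monomial',
          MvPolynomial.coeff_mul_monomial', mul_one, mul_one]]
      simp only [hn, eq_self_iff_true, true_and]
      exact sub_self _

lemma substSeries_add (A B : MvPowerSeries (Fin s) K) :
    substSeries f (A + B) = substSeries f A + substSeries f B := by
  ext n
  simp only [coeff_substSeries, map_add, add_mul, Finset.sum_add_distrib]

end StmtAux


open StmtAux

/-- If `{f₁,…,f_s}` is a basis of `R = K⟦f₁,…,f_s⟧`, the kernel of the substitution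
homomorphism `ψ : K⟦X₁,…,X_s⟧ → K⟦x⟧`, `Xᵢ ↦ fᵢ`, is generated by the elements
`Gᵢ = Fᵢ − Pᵢ`, where `F₁,…,F_r` are binomials generating the kernel of
`φ : K[X₁,…,X_s] → K[x]`, `Xᵢ ↦ x^{o(fᵢ)}`, `Sᵢ = ψ(Fᵢ)`, and `Pᵢ` is an expression of
`Sᵢ` in `f₁,…,f_s` all of whose monomials have weight `> pᵢ`. -/
theorem stmt_10 (K : Type*) [Field K] {s r : ℕ} (f : Fin s → PowerSeries K)
    (hf0 : ∀ i, f i ≠ 0) (hford : ∀ i, 0 < ord K (f i))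
    (hmonic : ∀ i, coeff (ord K (f i)) (f i) = 1)
    (hlen : FiniteLengthQuot K (seriesAlgebra f))
    (hbasis : oSet K (seriesAlgebra f)
        = ↑(AddSubmonoid.closure (Set.range fun j => ord K (f j))))
    (α β : Fin r → (Fin s →₀ ℕ))
    (hker : RingHom.ker (MvPolynomial.aeval fun i => (Polynomial.X : Polynomial K) ^ ord K (f i))
      = Ideal.span (Set.range fun i =>
          (MvPolynomial.monomial (α i) (1 : K) - MvPolynomial.monomial (β i) (1 : K))))
    (P : Fin r → MvPowerSeries (Fin s) K)
    (hP : ∀ i, substSeries f (P i) = (∏ j, f j ^ (α i) j) - (∏ j, f j ^ (β i) j))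
    (hPweight : ∀ i, ∀ θ : Fin s →₀ ℕ, MvPowerSeries.coeff θ (P i) ≠ 0 →
      (∑ j, (α i) j * ord K (f j)) < ∑ j, θ j * ord K (f j)) :
    {Q : MvPowerSeries (Fin s) K | substSeries f Q = 0}
      = ↑(Ideal.span (Set.range fun i =>
          ((MvPowerSeries.monomial (α i)) (1 : K)
            - (MvPowerSeries.monomial (β i)) (1 : K) - P i))) := by

  classical
  set G : Fin r → MvPowerSeries (Fin s) K := fun i =>
    (MvPowerSeries.monomial (α i)) (1 : K)
      - (MvPowerSeries.monomial (β i)) (1 : K) - P i with hG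
  have hPw : ∀ i, ∀ θ : Fin s →₀ ℕ, MvPowerSeries.coeff θ (P i) ≠ 0 →
      wtF (fun j => ord K (f j)) (α i) < wtF (fun j => ord K (f j)) θ :=
    fun i θ hne => hPweight i θ hne
  ext Q
  simp only [Set.mem_setOf_eq, SetLike.mem_coe]
  constructor
  · -- hard direction
    intro hQ
    have hstep' : ∀ (n : ℕ) (Q' : MvPowerSeries (Fin s) K),
        ∃ h : Fin r → MvPowerSeries (Fin s) K,
          substSeries f Q' = 0 →
          (∀ θ, wtF (fun j => ord K (f j)) θ < n → MvPowerSeries.coeff θ Q' = 0) →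
          ((∀ i θ, MvPowerSeries.coeff θ (h i) ≠ 0
              → wtF (fun j => ord K (f j)) θ + wtF (fun j => ord K (f j)) (α i) = n)
            ∧ substSeries f (Q' - ∑ i, h i * G i) = 0
            ∧ ∀ θ, wtF (fun j => ord K (f j)) θ < n + 1
                → MvPowerSeries.coeff θ (Q' - ∑ i, h i * G i) = 0) := by
      intro n Q'
      by_cases h1 : substSeries f Q' = 0
        ∧ (∀ θ, wtF (fun j => ord K (f j)) θ < n → MvPowerSeries.coeff θ Q' = 0)
      · obtain ⟨h, hh⟩ := step f hmonic hford α β P hker hP hPw n Q' h1.1 h1.2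
        exact ⟨h, fun _ _ => hh⟩
      · exact ⟨0, fun ha hb => absurd ⟨ha, hb⟩ h1⟩
    choose F hF using hstep'
    let T : ℕ → MvPowerSeries (Fin s) K := fun n =>
      Nat.rec Q (fun m prev => prev - ∑ i, F m prev i * G i) n
    have hTs : ∀ n, T (n + 1) = T n - ∑ i, F n (T n) i * G i := fun n => rfl
    have hInv : ∀ n, substSeries f (T n) = 0
        ∧ ∀ θ, wtF (fun j => ord K (f j)) θ < n → MvPowerSeries.coeff θ (T n) = 0 := by
      intro n
      induction n with
      | zero => exact ⟨hQ, fun θ h => absurd h (Nat.not_lt_zero _)⟩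
      | succ n ih =>
        have h3 := hF n (T n) ih.1 ih.2
        rw [hTs n]
        exact ⟨h3.2.1, h3.2.2⟩
    have hFsupp : ∀ n i θ, MvPowerSeries.coeff θ (F n (T n) i) ≠ 0
        → wtF (fun j => ord K (f j)) θ + wtF (fun j => ord K (f j)) (α i) = n :=
      fun n i θ hne => (hF n (T n) (hInv n).1 (hInv n).2).1 i θ hne
    set Hinf : Fin r → MvPowerSeries (Fin s) K := fun i =>
      (fun θ => MvPowerSeries.coeff θ
        (F (wtF (fun j => ord K (f j)) θ + wtF (fun j => ord K (f j)) (α i))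
          (T (wtF (fun j => ord K (f j)) θ + wtF (fun j => ord K (f j)) (α i))) i)) with hHinf
    have hfin : ∀ (N : ℕ) (i : Fin r) (μ : Fin s →₀ ℕ),
        wtF (fun j => ord K (f j)) μ + wtF (fun j => ord K (f j)) (α i) < N →
        MvPowerSeries.coeff μ (Hinf i)
          = ∑ n ∈ Finset.range N, MvPowerSeries.coeff μ (F n (T n) i) := by
      intro N i μ hlt
      rw [Finset.sum_eq_single_of_mem
        (wtF (fun j => ord K (f j)) μ + wtF (fun j => ord K (f j)) (α i))
        (Finset.mem_range.mpr hlt)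
        (fun n _ hne => by
          by_contra hc
          exact hne (hFsupp n i μ hc).symm)]
      rfl
    have hTN : ∀ N, T N = Q - ∑ i, (∑ n ∈ Finset.range N, F n (T n) i) * G i := by
      intro N
      induction N with
      | zero => simp [T]
      | succ N ih =>
        calc T (N + 1) = T N - ∑ i, F N (T N) i * G i := hTs N
          _ = Q - ∑ i, (∑ n ∈ Finset.range N, F n (T n) i) * G i
              - ∑ i, F N (T N) i * G i := by rw [ih]
          _ = Q - ∑ i, (∑ n ∈ Finset.range (N + 1), F n (T n) i) * G i := by
              rw [show (∑ i, (∑ n ∈ Finset.range (N + 1), F n (T n) i) * G i)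
                  = ∑ i, ((∑ n ∈ Finset.range N, F n (T n) i) * G i + F N (T N) i * G i) from
                Finset.sum_congr rfl fun i _ => by rw [Finset.sum_range_succ, add_mul]]
              rw [Finset.sum_add_distrib, sub_sub]
    have hQeq : Q = ∑ i, Hinf i * G i := by
      ext θ
      set N : ℕ := wtF (fun j => ord K (f j)) θ
        + (∑ i, wtF (fun j => ord K (f j)) (α i)) + 1 with hN
      have h1 : MvPowerSeries.coeff θ (T N) = 0 :=
        (hInv N).2 θ (by omega)
      rw [hTN N, map_sub, sub_eq_zero] at h1
      rw [h1]
      rw [map_sum, map_sum]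
      refine Finset.sum_congr rfl fun i _ => ?_
      rw [MvPowerSeries.coeff_mul, MvPowerSeries.coeff_mul]
      refine Finset.sum_congr rfl fun p hp => ?_
      congr 1
      have hple : p.1 ≤ θ := by
        rw [← Finset.HasAntidiagonal.mem_antidiagonal.mp hp]; exact le_self_add
      have hwle : wtF (fun j => ord K (f j)) p.1 ≤ wtF (fun j => ord K (f j)) θ :=
        wtF_mono _ hple
      have hαle : wtF (fun j => ord K (f j)) (α i)
          ≤ ∑ i, wtF (fun j => ord K (f j)) (α i) :=
        Finset.single_le_sum (f := fun i => wtF (fun j => ord K (f j)) (α i))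
          (fun _ _ => Nat.zero_le _) (Finset.mem_univ i)
      rw [map_sum, ← hfin N i p.1 (by omega)]
    rw [hQeq]
    exact Ideal.sum_mem _ fun i _ =>
      Ideal.mul_mem_left _ _ (Ideal.subset_span ⟨i, rfl⟩)
  · -- easy direction
    intro hQ
    refine Submodule.span_induction ?_ ?_ ?_ ?_ hQ
    · rintro x ⟨i, rfl⟩
      exact substSeries_G_zero f hmonic hford α β P hP i
    · exact substSeries_zero f
    · intro x y _ _ hx hy
      rw [substSeries_add, hx, hy, add_zero]
    · intro a x _ hx
      rw [smul_eq_mul, substSeries_mul f hmonic hford, hx, mul_zero]
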